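/- Let c_1, …, c_{2n} be the Jordan–Wigner operators on n qubits, let a = [a_{μν}] be an antisymmetric 2n×2n complex matrix, let A = Σ_{μ,ν=1}^{2n} a_{μν} c_μ c_ν, and let T = exp(A). Then for every μ, T c_μ T⁻¹ = Σ_{ν=1}^{2n} K_{μν} c_ν, where the 2n×2n matrix K = [K_{μν}] is given by K = exp(−4a). In particular, the complex linear span of c_1, …, c_{2n} is preserved under conjugation by T. -/

import Mathlib

noncomputable section

open Matrix

def pauliX : Matrix (Fin 2) (Fin 2) ℂ := !![0, 1; 1, 0]
def pauliY : Matrix (Fin 2) (Fin 2) ℂ := !![0, -Complex.I; Complex.I, 0]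
def pauliZ : Matrix (Fin 2) (Fin 2) ℂ := !![1, 0; 0, -1]

/-- The Jordan–Wigner operators on `n` qubits, as matrices on the `n`-fold tensor
product `⊗ⁿ ℂ²`, identified with `(Fin n → Fin 2) → ℂ`.  Here `μ : Fin (2*n)`
(0-based) corresponds to `c_{μ+1}` (1-based), so that for `k = 1,…,n` (1-based)
`c_{2k-1} = Z^{⊗(k-1)} ⊗ X ⊗ I^{⊗(n-k)}` and `c_{2k} = Z^{⊗(k-1)} ⊗ Y ⊗ I^{⊗(n-k)}`:
the entry of a tensor product of one-qubit matrices is the product of the entries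
of the factors. -/
def JW (n : ℕ) (μ : Fin (2 * n)) : Matrix (Fin n → Fin 2) (Fin n → Fin 2) ℂ :=
  fun x y => ∏ s : Fin n,
    (if (s : ℕ) < (μ : ℕ) / 2 then pauliZ
     else if (s : ℕ) = (μ : ℕ) / 2 then (if (μ : ℕ) % 2 = 0 then pauliX else pauliY)
     else (1 : Matrix (Fin 2) (Fin 2) ℂ)) (x s) (y s)

namespace JWProof

open NormedSpace

/-! ### Pauli matrix identities -/

lemma XX : pauliX * pauliX = 1 := by
  ext i j; fin_cases i <;> fin_cases j <;>
    simp [pauliX, Matrix.mul_apply, Fin.sum_univ_two, Matrix.one_apply]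

lemma YY : pauliY * pauliY = 1 := by
  ext i j; fin_cases i <;> fin_cases j <;>
    simp [pauliY, Matrix.mul_apply, Fin.sum_univ_two, Matrix.one_apply]

lemma ZZ : pauliZ * pauliZ = 1 := by
  ext i j; fin_cases i <;> fin_cases j <;>
    simp [pauliZ, Matrix.mul_apply, Fin.sum_univ_two, Matrix.one_apply]

lemma XZ : pauliX * pauliZ = -(pauliZ * pauliX) := by
  ext i j; fin_cases i <;> fin_cases j <;>
    simp [pauliX, pauliZ, Matrix.mul_apply, Fin.sum_univ_two]

lemma ZX : pauliZ * pauliX = -(pauliX * pauliZ) := by rw [XZ, neg_neg]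

lemma YZ : pauliY * pauliZ = -(pauliZ * pauliY) := by
  ext i j; fin_cases i <;> fin_cases j <;>
    simp [pauliY, pauliZ, Matrix.mul_apply, Fin.sum_univ_two]

lemma ZY : pauliZ * pauliY = -(pauliY * pauliZ) := by rw [YZ, neg_neg]

lemma XY : pauliX * pauliY = -(pauliY * pauliX) := by
  ext i j; fin_cases i <;> fin_cases j <;>
    simp [pauliX, pauliY, Matrix.mul_apply, Fin.sum_univ_two]

lemma YX : pauliY * pauliX = -(pauliX * pauliY) := by rw [XY, neg_neg]

/-! ### The per-site structure of the Jordan–Wigner operators -/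

def site (n : ℕ) (μ : Fin (2 * n)) (s : Fin n) : Matrix (Fin 2) (Fin 2) ℂ :=
  if (s : ℕ) < (μ : ℕ) / 2 then pauliZ
  else if (s : ℕ) = (μ : ℕ) / 2 then (if (μ : ℕ) % 2 = 0 then pauliX else pauliY)
  else (1 : Matrix (Fin 2) (Fin 2) ℂ)

lemma JW_apply (n : ℕ) (μ : Fin (2 * n)) (x y : Fin n → Fin 2) :
    JW n μ x y = ∏ s : Fin n, site n μ s (x s) (y s) := rfl

lemma JW_mul_apply (n : ℕ) (μ ν : Fin (2 * n)) (x y : Fin n → Fin 2) :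
    (JW n μ * JW n ν) x y = ∏ s : Fin n, (site n μ s * site n ν s) (x s) (y s) := by
  rw [Matrix.mul_apply]
  simp_rw [JW_apply, ← Finset.prod_mul_distrib, Matrix.mul_apply]
  rw [Finset.prod_univ_sum]
  rw [← Fintype.piFinset_univ]

lemma site_mul_self (n : ℕ) (μ : Fin (2 * n)) (s : Fin n) :
    site n μ s * site n μ s = 1 := by
  unfold site
  split_ifs <;> simp [XX, YY, ZZ]

lemma JW_mul_self (n : ℕ) (μ : Fin (2 * n)) : JW n μ * JW n μ = 1 := by
  ext x y
  rw [JW_mul_apply]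
  simp_rw [site_mul_self]
  by_cases h : x = y
  · subst h; simp [Matrix.one_apply]
  · obtain ⟨s, hs⟩ := Function.ne_iff.mp h
    rw [Matrix.one_apply_ne h]
    exact Finset.prod_eq_zero (Finset.mem_univ s) (Matrix.one_apply_ne hs)

lemma site_comm (n : ℕ) (μ ν : Fin (2 * n)) (s : Fin n)
    (hs : (s : ℕ) ≠ min ((μ : ℕ) / 2) ((ν : ℕ) / 2)) :
    site n μ s * site n ν s = site n ν s * site n μ s := by
  unfold site
  split_ifs <;> first | rfl | simp | omega

lemma site_anticomm (n : ℕ) (μ ν : Fin (2 * n)) (h : (μ : ℕ) ≠ (ν : ℕ)) (s : Fin n)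
    (hs : (s : ℕ) = min ((μ : ℕ) / 2) ((ν : ℕ) / 2)) :
    site n μ s * site n ν s = -(site n ν s * site n μ s) := by
  unfold site
  split_ifs <;> first | exact XZ | exact ZX | exact YZ | exact ZY | exact XY | exact YX | omega

lemma JW_anticomm (n : ℕ) (μ ν : Fin (2 * n)) (h : μ ≠ ν) :
    JW n μ * JW n ν = -(JW n ν * JW n μ) := by
  have hv : (μ : ℕ) ≠ (ν : ℕ) := fun hc => h (Fin.ext hc)
  have hlt : min ((μ : ℕ) / 2) ((ν : ℕ) / 2) < n := by
    have := μ.isLt; have := ν.isLt; omega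
  set s0 : Fin n := ⟨min ((μ : ℕ) / 2) ((ν : ℕ) / 2), hlt⟩ with hs0
  ext x y
  rw [JW_mul_apply, Matrix.neg_apply, JW_mul_apply]
  rw [← Finset.mul_prod_erase Finset.univ _ (Finset.mem_univ s0),
      ← Finset.mul_prod_erase Finset.univ
        (fun s => (site n ν s * site n μ s) (x s) (y s)) (Finset.mem_univ s0)]
  rw [site_anticomm n μ ν hv s0 rfl]
  rw [Finset.prod_congr rfl (fun s hsmem => by
    rw [site_comm n μ ν s (fun hc => (Finset.mem_erase.mp hsmem).1 (Fin.ext (by rw [hc])))])]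
  simp [Matrix.neg_apply]

/-! ### The commutator of the quadratic Hamiltonian with the JW operators -/

lemma JW_swap (n : ℕ) (β μ : Fin (2 * n)) :
    JW n β * JW n μ = (if β = μ then (2 : ℂ) else 0) • 1 - JW n μ * JW n β := by
  by_cases h : β = μ
  · subst h
    rw [JW_mul_self, if_pos rfl, two_smul]
    abel
  · rw [JW_anticomm n β μ h, if_neg h, zero_smul, zero_sub]

lemma JW_bracket_term (n : ℕ) (α β μ : Fin (2 * n)) :
    JW n α * JW n β * JW n μ - JW n μ * (JW n α * JW n β)
      = (if β = μ then (2 : ℂ) else 0) • JW n α - (if α = μ then (2 : ℂ) else 0) • JW n β := by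
  have h1 : JW n α * JW n β * JW n μ
      = (if β = μ then (2 : ℂ) else 0) • JW n α - JW n α * JW n μ * JW n β := by
    rw [mul_assoc, JW_swap n β μ, mul_sub, mul_smul_comm, mul_one, ← mul_assoc]
  rw [h1, JW_swap n α μ, sub_mul, smul_mul_assoc, one_mul, mul_assoc]
  abel

lemma JW_bracket (n : ℕ) (a : Matrix (Fin (2 * n)) (Fin (2 * n)) ℂ)
    (ha : aᵀ = -a)
    (A : Matrix (Fin n → Fin 2) (Fin n → Fin 2) ℂ)
    (hA : A = ∑ μ : Fin (2 * n), ∑ ν : Fin (2 * n), a μ ν • (JW n μ * JW n ν)) (μ : Fin (2 * n)) :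
    A * JW n μ - JW n μ * A = ∑ ν : Fin (2 * n), ((-4 : ℂ) • a) μ ν • JW n ν := by
  have haval : ∀ α β, a α β = -a β α := by
    intro α β
    have := congrFun (congrFun ha β) α
    simpa [Matrix.transpose_apply, Matrix.neg_apply] using this
  subst hA
  rw [Finset.sum_mul, Finset.mul_sum, ← Finset.sum_sub_distrib]
  have hterm : ∀ α ∈ Finset.univ, ((∑ β : Fin (2*n), a α β • (JW n α * JW n β)) * JW n μ
      - JW n μ * ∑ β : Fin (2*n), a α β • (JW n α * JW n β))
      = (2 * a α μ) • JW n α - (if α = μ then (1:ℂ) else 0) • ∑ β, (2 * a μ β) • JW n β := by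
    intro α _
    rw [Finset.sum_mul, Finset.mul_sum, ← Finset.sum_sub_distrib]
    have hper : ∀ β ∈ Finset.univ, (a α β • (JW n α * JW n β)) * JW n μ
        - JW n μ * (a α β • (JW n α * JW n β))
        = a α β • ((if β = μ then (2 : ℂ) else 0) • JW n α
            - (if α = μ then (2 : ℂ) else 0) • JW n β) := by
      intro β _
      rw [smul_mul_assoc, mul_smul_comm, ← smul_sub, JW_bracket_term]
    rw [Finset.sum_congr rfl hper]
    simp_rw [smul_sub, smul_smul, Finset.sum_sub_distrib]
    congr 1
    · simp [mul_ite, mul_zero, ite_smul, zero_smul, mul_comm]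
    · by_cases h : α = μ
      · subst h
        simp [mul_comm]
      · simp [h]
  rw [Finset.sum_congr rfl hterm, Finset.sum_sub_distrib]
  have h2 : ∑ α : Fin (2*n), (if α = μ then (1:ℂ) else 0) • ∑ β, (2 * a μ β) • JW n β
      = ∑ β, (2 * a μ β) • JW n β := by
    simp [ite_smul, zero_smul]
  rw [h2, ← Finset.sum_sub_distrib]
  refine Finset.sum_congr rfl fun ν _ => ?_
  rw [← sub_smul]
  congr 1
  rw [haval ν μ]
  simp [Matrix.smul_apply]
  ring

/-! ### Conjugation by the exponential in a complete normed algebra -/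

variable {E : Type*} [NormedRing E] [NormedAlgebra ℂ E] [CompleteSpace E]

lemma expL_apply (A B : E) :
    exp (ContinuousLinearMap.mul ℂ E A) B = exp A * B := by
  have hpow : ∀ k : ℕ, ((ContinuousLinearMap.mul ℂ E A) ^ k) B = A ^ k * B := by
    intro k; induction k with
    | zero => simp
    | succ k ih =>
      rw [pow_succ', pow_succ']
      show (ContinuousLinearMap.mul ℂ E A) (((ContinuousLinearMap.mul ℂ E A) ^ k) B) = _
      rw [ih]
      simp [mul_assoc]
  have h1 : exp (ContinuousLinearMap.mul ℂ E A) B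
      = ∑' k : ℕ, (((Nat.factorial k : ℂ))⁻¹ • (ContinuousLinearMap.mul ℂ E A) ^ k) B := by
    rw [exp_eq_tsum ℂ]
    exact (ContinuousLinearMap.apply ℂ E B).map_tsum
      (expSeries_summable' (𝕂 := ℂ) (ContinuousLinearMap.mul ℂ E A))
  rw [h1]
  have h2 : ∀ k : ℕ, (((Nat.factorial k : ℂ))⁻¹ • (ContinuousLinearMap.mul ℂ E A) ^ k) B
      = ((ContinuousLinearMap.mul ℂ E).flip B) (((Nat.factorial k : ℂ))⁻¹ • A ^ k) := by
    intro k
    simp [hpow k, smul_mul_assoc]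
  simp_rw [h2]
  rw [← ((ContinuousLinearMap.mul ℂ E).flip B).map_tsum (expSeries_summable' (𝕂 := ℂ) A)]
  simp only [exp_eq_tsum ℂ]
  rfl

lemma expR_apply (A B : E) :
    exp ((ContinuousLinearMap.mul ℂ E).flip A) B = B * exp A := by
  have hpow : ∀ k : ℕ, (((ContinuousLinearMap.mul ℂ E).flip A) ^ k) B = B * A ^ k := by
    intro k; induction k with
    | zero => simp
    | succ k ih =>
      rw [pow_succ', pow_succ]
      show ((ContinuousLinearMap.mul ℂ E).flip A)
        ((((ContinuousLinearMap.mul ℂ E).flip A) ^ k) B) = _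
      rw [ih]
      show (B * A ^ k) * A = _
      rw [mul_assoc]
  have h1 : exp ((ContinuousLinearMap.mul ℂ E).flip A) B
      = ∑' k : ℕ, (((Nat.factorial k : ℂ))⁻¹ • ((ContinuousLinearMap.mul ℂ E).flip A) ^ k) B := by
    rw [exp_eq_tsum ℂ]
    exact (ContinuousLinearMap.apply ℂ E B).map_tsum
      (expSeries_summable' (𝕂 := ℂ) ((ContinuousLinearMap.mul ℂ E).flip A))
  rw [h1]
  have h2 : ∀ k : ℕ, (((Nat.factorial k : ℂ))⁻¹ • ((ContinuousLinearMap.mul ℂ E).flip A) ^ k) B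
      = (ContinuousLinearMap.mul ℂ E B) (((Nat.factorial k : ℂ))⁻¹ • A ^ k) := by
    intro k
    simp [hpow k, mul_smul_comm]
  simp_rw [h2]
  rw [← (ContinuousLinearMap.mul ℂ E B).map_tsum (expSeries_summable' (𝕂 := ℂ) A)]
  simp only [exp_eq_tsum ℂ]
  rfl

lemma exp_ad_apply (A B : E) :
    exp (ContinuousLinearMap.mul ℂ E A - (ContinuousLinearMap.mul ℂ E).flip A) B
      = exp A * B * exp (-A) := by
  have hsplit : ContinuousLinearMap.mul ℂ E A - (ContinuousLinearMap.mul ℂ E).flip A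
      = ContinuousLinearMap.mul ℂ E A + (ContinuousLinearMap.mul ℂ E).flip (-A) := by
    rw [map_neg, sub_eq_add_neg]
  have hcomm : Commute (ContinuousLinearMap.mul ℂ E A)
      ((ContinuousLinearMap.mul ℂ E).flip (-A)) := by
    ext x
    show A * (x * -A) = (A * x) * -A
    rw [mul_assoc]
  rw [hsplit, NormedSpace.exp_add_of_commute_of_mem_ball (𝕂 := ℂ) hcomm
    ((expSeries_radius_eq_top ℂ (E →L[ℂ] E)).symm ▸ edist_lt_top _ _)
    ((expSeries_radius_eq_top ℂ (E →L[ℂ] E)).symm ▸ edist_lt_top _ _)]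
  show exp (ContinuousLinearMap.mul ℂ E A)
    (exp ((ContinuousLinearMap.mul ℂ E).flip (-A)) B) = _
  rw [expR_apply, expL_apply, mul_assoc]

lemma conj_exp_of_bracket {ι : Type*} [Fintype ι] [DecidableEq ι]
    (A : E) (c : ι → E) (M : Matrix ι ι ℂ)
    (hbr : ∀ i, A * c i - c i * A = ∑ j, M i j • c j) (i : ι) :
    exp A * c i * exp (-A) = ∑ j, exp M i j • c j := by
  letI : SeminormedRing (Matrix ι ι ℂ) := Matrix.linftyOpSemiNormedRing
  letI : NormedRing (Matrix ι ι ℂ) := Matrix.linftyOpNormedRing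
  letI : NormedAlgebra ℂ (Matrix ι ι ℂ) := Matrix.linftyOpNormedAlgebra
  set T : E →L[ℂ] E :=
    ContinuousLinearMap.mul ℂ E A - (ContinuousLinearMap.mul ℂ E).flip A with hT
  have hTapp : ∀ B : E, T B = A * B - B * A := fun B => rfl
  have hpow : ∀ k : ℕ, (T ^ k) (c i) = ∑ j, (M ^ k) i j • c j := by
    intro k; induction k with
    | zero =>
      simp [Matrix.one_apply, ite_smul]
    | succ k ih =>
      rw [pow_succ']
      show T ((T ^ k) (c i)) = _
      rw [ih, map_sum]
      have : ∀ j, T ((M ^ k) i j • c j) = (M ^ k) i j • ∑ l, M j l • c l := by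
        intro j
        rw [_root_.map_smul, hTapp, hbr]
      simp_rw [this, Finset.smul_sum, smul_smul]
      rw [Finset.sum_comm]
      refine Finset.sum_congr rfl fun l _ => ?_
      rw [pow_succ, Matrix.mul_apply, Finset.sum_smul]
  rw [← exp_ad_apply, ← hT]
  let Φ : Matrix ι ι ℂ →ₗ[ℂ] E :=
    { toFun := fun N => ∑ j, N i j • c j
      map_add' := by
        intro x y
        simp [Matrix.add_apply, add_smul, Finset.sum_add_distrib]
      map_smul' := by
        intro r x
        simp [Matrix.smul_apply, smul_smul, Finset.smul_sum] }
  have hΦ : Continuous Φ := LinearMap.continuous_of_finiteDimensional Φ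
  let ΦL : Matrix ι ι ℂ →L[ℂ] E := ⟨Φ, hΦ⟩
  have key : exp T (c i) = ΦL (exp M) := by
    have h1 : exp T (c i) = ∑' k : ℕ, (((Nat.factorial k) : ℂ)⁻¹ • T ^ k) (c i) := by
      rw [exp_eq_tsum ℂ]
      exact (ContinuousLinearMap.apply ℂ E (c i)).map_tsum
        (expSeries_summable' (𝕂 := ℂ) T)
    rw [h1]
    have h2 : ∀ k : ℕ, (((Nat.factorial k) : ℂ)⁻¹ • T ^ k) (c i)
        = ΦL (((Nat.factorial k) : ℂ)⁻¹ • M ^ k) := by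
      intro k
      show ((Nat.factorial k : ℂ))⁻¹ • (T ^ k) (c i) = Φ _
      rw [_root_.map_smul, hpow]
      rfl
    simp_rw [h2]
    rw [← ΦL.map_tsum (expSeries_summable' (𝕂 := ℂ) M)]
    congr 1
    rw [exp_eq_tsum ℂ]
  rw [key]
  rfl

end JWProof

theorem conj_exp_quadratic_JW (n : ℕ) (a : Matrix (Fin (2 * n)) (Fin (2 * n)) ℂ)
    (ha : aᵀ = -a)
    (A : Matrix (Fin n → Fin 2) (Fin n → Fin 2) ℂ)
    (hA : A = ∑ μ : Fin (2 * n), ∑ ν : Fin (2 * n), a μ ν • (JW n μ * JW n ν)) :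
    (∀ μ : Fin (2 * n),
      NormedSpace.exp A * JW n μ * NormedSpace.exp (-A) =
        ∑ ν : Fin (2 * n), (NormedSpace.exp ((-4 : ℂ) • a)) μ ν • JW n ν) ∧
    (∀ B ∈ Submodule.span ℂ (Set.range (JW n)),
      NormedSpace.exp A * B * NormedSpace.exp (-A) ∈
        Submodule.span ℂ (Set.range (JW n))) := by
  letI : SeminormedRing (Matrix (Fin n → Fin 2) (Fin n → Fin 2) ℂ) :=
    Matrix.linftyOpSemiNormedRing
  letI : NormedRing (Matrix (Fin n → Fin 2) (Fin n → Fin 2) ℂ) := Matrix.linftyOpNormedRing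
  letI : NormedAlgebra ℂ (Matrix (Fin n → Fin 2) (Fin n → Fin 2) ℂ) :=
    Matrix.linftyOpNormedAlgebra
  have part1 : ∀ μ : Fin (2 * n),
      NormedSpace.exp A * JW n μ * NormedSpace.exp (-A) =
        ∑ ν : Fin (2 * n), (NormedSpace.exp ((-4 : ℂ) • a)) μ ν • JW n ν := by
    intro μ
    exact JWProof.conj_exp_of_bracket A (JW n) ((-4 : ℂ) • a)
      (JWProof.JW_bracket n a ha A hA) μ
  refine ⟨part1, ?_⟩
  intro B hB
  induction hB using Submodule.span_induction with
  | mem x hx =>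
    obtain ⟨μ, rfl⟩ := hx
    rw [part1 μ]
    exact Submodule.sum_mem _ fun ν _ =>
      Submodule.smul_mem _ _ (Submodule.subset_span ⟨ν, rfl⟩)
  | zero => simp
  | add x y _ _ hx hy =>
    have : NormedSpace.exp A * (x + y) * NormedSpace.exp (-A)
        = NormedSpace.exp A * x * NormedSpace.exp (-A)
          + NormedSpace.exp A * y * NormedSpace.exp (-A) := by
      rw [mul_add, add_mul]
    rw [this]
    exact Submodule.add_mem _ hx hy
  | smul r x _ hx =>
    have : NormedSpace.exp A * (r • x) * NormedSpace.exp (-A)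
        = r • (NormedSpace.exp A * x * NormedSpace.exp (-A)) := by
      rw [mul_smul_comm, smul_mul_assoc]
    rw [this]
    exact Submodule.smul_mem _ _ hx
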